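/- Fix σ ∈ ℝ. Let (v_k) be generated by inverse iteration: v_{k+1} = ψ(v_k)/‖ψ(v_k)‖₂ where ψ(v) = (J(v) − σI)⁻¹v, and let (y_k) be generated by the projected Rosenbrock–Euler scheme: with step length h_k = 1/(p(y_k) − σ), set ỹ_{k+1} := ((1/h_k − p(y_k))I + J(y_k))⁻¹ (1/h_k) y_k and y_{k+1} := ỹ_{k+1}/‖ỹ_{k+1}‖₂. Assume y_0 = v_0 with ‖v_0‖₂ = 1, and assume for every k that p(v_k) > σ and J(v_k) − σI is invertible. Then v_k = y_k for all k ∈ ℕ. -/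

import Mathlib

open Matrix Asymptotics Topology
open scoped RealInnerProductSpace

noncomputable def mvCLM {ι : Type*} [Fintype ι] [DecidableEq ι] (M : Matrix ι ι ℝ) :
    EuclideanSpace ℝ ι →L[ℝ] EuclideanSpace ℝ ι :=
  LinearMap.toContinuousLinearMap (Matrix.toEuclideanLin M)

noncomputable def invitPsi {n : ℕ} (J : EuclideanSpace ℝ (Fin n) → Matrix (Fin n) (Fin n) ℝ)
    (σ : ℝ) (v : EuclideanSpace ℝ (Fin n)) : EuclideanSpace ℝ (Fin n) :=
  mvCLM ((J v - σ • 1)⁻¹) v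

noncomputable def invitPhi {n : ℕ} (J : EuclideanSpace ℝ (Fin n) → Matrix (Fin n) (Fin n) ℝ)
    (σ : ℝ) (v : EuclideanSpace ℝ (Fin n)) : EuclideanSpace ℝ (Fin n) :=
  ‖invitPsi J σ v‖⁻¹ • invitPsi J σ v

noncomputable def rayQuot {n : ℕ} (A : EuclideanSpace ℝ (Fin n) → Matrix (Fin n) (Fin n) ℝ)
    (v : EuclideanSpace ℝ (Fin n)) : ℝ :=
  ⟪v, mvCLM (A v) v⟫ / ⟪v, v⟫

/-- Inverse iteration `v_{k+1} = ψ(v_k)/‖ψ(v_k)‖` coincides with the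
projected Rosenbrock–Euler discretization of `y' = p(y)y − A(y)y` with step length
`h_k = 1/(p(y_k) − σ)`, provided `y_0 = v_0`, `‖v_0‖ = 1`, and for all `k` one has
`p(v_k) > σ` and `J(v_k) − σI` invertible. -/
theorem stmt16 {n : ℕ} (hn : 1 ≤ n)
    (A J : EuclideanSpace ℝ (Fin n) → Matrix (Fin n) (Fin n) ℝ)
    (hsymm : ∀ v : EuclideanSpace ℝ (Fin n), v ≠ 0 → (A v).IsSymm)
    (hsmooth : ContDiffOn ℝ 1 (fun w i j => A w i j) {(0 : EuclideanSpace ℝ (Fin n))}ᶜ)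
    (hscale : ∀ α : ℝ, α ≠ 0 → ∀ v : EuclideanSpace ℝ (Fin n), v ≠ 0 → A (α • v) = A v)
    (hJ : ∀ v : EuclideanSpace ℝ (Fin n), v ≠ 0 →
      HasFDerivAt (fun w => mvCLM (A w) w) (mvCLM (J v)) v)
    (σ : ℝ) (v y ytil : ℕ → EuclideanSpace ℝ (Fin n)) (h : ℕ → ℝ)
    (hv0norm : ‖v 0‖ = 1) (hy0 : y 0 = v 0)
    (hvrec : ∀ k, v (k + 1) = ‖invitPsi J σ (v k)‖⁻¹ • invitPsi J σ (v k))
    (hh : ∀ k, h k = 1 / (rayQuot A (y k) - σ))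
    (hytil : ∀ k, ytil k =
      mvCLM ((((1 / h k - rayQuot A (y k)) • (1 : Matrix (Fin n) (Fin n) ℝ) +
        J (y k))⁻¹)) ((1 / h k) • y k))
    (hyrec : ∀ k, y (k + 1) = ‖ytil k‖⁻¹ • ytil k)
    (hray : ∀ k, σ < rayQuot A (v k))
    (hinv : ∀ k, IsUnit (J (v k) - σ • (1 : Matrix (Fin n) (Fin n) ℝ))) :
    ∀ k, v k = y k := by
  intro k
  induction k with
  | zero => exact hy0.symm
  | succ k ih =>
    have hpσ : 0 < rayQuot A (v k) - σ := sub_pos.mpr (hray k)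
    have hne : rayQuot A (v k) - σ ≠ 0 := ne_of_gt hpσ
    have hrq : rayQuot A (y k) = rayQuot A (v k) := by rw [ih]
    have hhk : 1 / h k = rayQuot A (v k) - σ := by
      rw [hh k, hrq, one_div_one_div]
    have hcoef : 1 / h k - rayQuot A (y k) = -σ := by rw [hhk, hrq]; ring
    have hyt : ytil k = (rayQuot A (v k) - σ) • invitPsi J σ (v k) := by
      have hm : -σ • (1 : Matrix (Fin n) (Fin n) ℝ) + J (v k) = J (v k) - σ • 1 := by
        rw [neg_smul, add_comm, ← sub_eq_add_neg]
      rw [hytil k, hcoef, ← ih, hhk, hm, invitPsi, _root_.map_smul]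
    rw [hvrec k, hyrec k, hyt, norm_smul, Real.norm_eq_abs,
      abs_of_pos hpσ, mul_inv, smul_smul]
    congr 1
    field_simp
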